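/- If the three faces of a combinatorial cube adjacent to the vertex x000 are circular, i.e. the quadruples {x000,x100,x110,x010}, {x000,x100,x101,x001}, {x000,x010,x011,x001} are each Concyclic, and the seven vertices x000, x100, x010, x001, x110, x101, x011 are pairwise distinct and not coplanar, then these seven vertices lie on a common sphere, i.e. the set {x000, x100, x010, x001, x110, x101, x011} is Cospherical. -/

import Mathlib

open EuclideanGeometry

open Affine Module in
private lemma miquel_range_triple {α : Type*} (a b c : α) :
    Set.range ![a, b, c] = ({a, b, c} : Set α) := by
  simp [Matrix.range_cons, Matrix.range_empty]; ext x; simp; tauto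

open Affine Module in
private lemma miquel_subset_span_of_coplanar {a b c : EuclideanSpace ℝ (Fin 3)}
    {s : Set (EuclideanSpace ℝ (Fin 3))}
    (hind : AffineIndependent ℝ ![a, b, c]) (hsub : {a, b, c} ⊆ s)
    (hcop : Coplanar ℝ s) :
    s ⊆ (affineSpan ℝ ({a, b, c} : Set (EuclideanSpace ℝ (Fin 3))) :
      Set (EuclideanSpace ℝ (Fin 3))) := by
  have h1 : vectorSpan ℝ ({a, b, c} : Set (EuclideanSpace ℝ (Fin 3))) ≤ vectorSpan ℝ s :=
    vectorSpan_mono ℝ hsub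
  have hfr : finrank ℝ (vectorSpan ℝ ({a, b, c} : Set (EuclideanSpace ℝ (Fin 3)))) = 2 := by
    have h := (affineIndependent_iff_finrank_vectorSpan_eq ℝ ![a, b, c]
      (by simp : Fintype.card (Fin 3) = 2 + 1)).mp hind
    rwa [miquel_range_triple] at h
  have heq : vectorSpan ℝ ({a, b, c} : Set (EuclideanSpace ℝ (Fin 3))) = vectorSpan ℝ s :=
    Submodule.eq_of_le_of_finrank_le h1 (by rw [hfr]; exact hcop.finrank_le_two)
  have hspan : affineSpan ℝ s = affineSpan ℝ ({a, b, c} : Set (EuclideanSpace ℝ (Fin 3))) := by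
    apply AffineSubspace.ext_of_direction_eq
    · rw [direction_affineSpan, direction_affineSpan, heq]
    · exact ⟨a, mem_affineSpan ℝ (hsub (by simp)), mem_affineSpan ℝ (by simp)⟩
  intro x hx
  have hx' := mem_affineSpan ℝ hx
  rwa [hspan] at hx'

open Affine Module in
private lemma miquel_dist_eq_of_mem_span (t : Simplex ℝ (EuclideanSpace ℝ (Fin 3)) 2)
    {q o c₁ : EuclideanSpace ℝ (Fin 3)} {R r₁ : ℝ}
    (hq : q ∈ affineSpan ℝ (Set.range t.points))
    (ho : ∀ i, dist (t.points i) o = R)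
    (hc₁ : ∀ i, dist (t.points i) c₁ = r₁)
    (hq₁ : dist q c₁ = r₁) : dist q o = R := by
  have hR : 0 ≤ R := ho 0 ▸ dist_nonneg
  have h0 : t.points 0 ∈ affineSpan ℝ (Set.range t.points) :=
    mem_affineSpan ℝ (Set.mem_range_self 0)
  have po := t.orthogonalProjection_eq_circumcenter_of_dist_eq ho
  have pc := t.orthogonalProjection_eq_circumcenter_of_dist_eq hc₁
  have do2 := t.dist_circumcenter_sq_eq_sq_sub_circumradius ho po h0
  have dc2 := t.dist_circumcenter_sq_eq_sq_sub_circumradius hc₁ pc h0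
  have e1 := t.dist_sq_eq_dist_orthogonalProjection_sq_add_dist_orthogonalProjection_sq o hq
  have e2 := t.dist_sq_eq_dist_orthogonalProjection_sq_add_dist_orthogonalProjection_sq c₁ hq
  rw [po] at e1
  rw [pc, hq₁] at e2
  have key : dist q o * dist q o = R * R := by nlinarith [e1, e2, do2, dc2]
  exact (mul_self_inj_of_nonneg dist_nonneg hR).mp key

/-- If the three faces of a combinatorial cube adjacent to the vertex `x000`
are circular, and the seven vertices other than `x111` are pairwise distinct
and not coplanar, then these seven vertices lie on a common sphere. -/
theorem miquel_cube_seven_cospherical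
    (x000 x100 x010 x001 x110 x101 x011 : EuclideanSpace ℝ (Fin 3))
    (hdist : List.Pairwise (· ≠ ·) [x000, x100, x010, x001, x110, x101, x011])
    (hncop : ¬ Coplanar ℝ ({x000, x100, x010, x001, x110, x101, x011} :
      Set (EuclideanSpace ℝ (Fin 3))))
    (hf₁ : Concyclic ({x000, x100, x110, x010} : Set (EuclideanSpace ℝ (Fin 3))))
    (hf₂ : Concyclic ({x000, x100, x101, x001} : Set (EuclideanSpace ℝ (Fin 3))))
    (hf₃ : Concyclic ({x000, x010, x011, x001} : Set (EuclideanSpace ℝ (Fin 3)))) :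
    Cospherical ({x000, x100, x010, x001, x110, x101, x011} :
      Set (EuclideanSpace ℝ (Fin 3))) := by
  simp only [List.pairwise_cons, List.mem_cons, List.mem_singleton, List.not_mem_nil,
    forall_eq_or_imp, forall_eq, List.Pairwise.nil, and_true, List.not_mem_nil,
    IsEmpty.forall_iff, imp_true_iff] at hdist
  obtain ⟨⟨hab, hac, had, -, -, -⟩, ⟨hbc, hbd, -, -, -⟩, ⟨hcd, -, -, -⟩, -⟩ := hdist
  -- affine independence of the three triples at x000
  have hind₁ : AffineIndependent ℝ ![x000, x100, x010] :=
    hf₁.1.affineIndependent_of_mem_of_ne (by simp) (by simp) (by simp) hab hac hbc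
  have hind₂ : AffineIndependent ℝ ![x000, x100, x001] :=
    hf₂.1.affineIndependent_of_mem_of_ne (by simp) (by simp) (by simp) hab had hbd
  have hind₃ : AffineIndependent ℝ ![x000, x010, x001] :=
    hf₃.1.affineIndependent_of_mem_of_ne (by simp) (by simp) (by simp) hac had hcd
  -- each fourth face point lies in the plane of the corresponding triple
  have he : x110 ∈ affineSpan ℝ ({x000, x100, x010} : Set (EuclideanSpace ℝ (Fin 3))) :=
    miquel_subset_span_of_coplanar hind₁ (by intro x hx; simp at hx ⊢; tauto) hf₁.2 (by simp)
  have hfm : x101 ∈ affineSpan ℝ ({x000, x100, x001} : Set (EuclideanSpace ℝ (Fin 3))) :=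
    miquel_subset_span_of_coplanar hind₂ (by intro x hx; simp at hx ⊢; tauto) hf₂.2 (by simp)
  have hgm : x011 ∈ affineSpan ℝ ({x000, x010, x001} : Set (EuclideanSpace ℝ (Fin 3))) :=
    miquel_subset_span_of_coplanar hind₃ (by intro x hx; simp at hx ⊢; tauto) hf₃.2 (by simp)
  -- the four base points are not coplanar
  have h4 : ¬ Coplanar ℝ ({x000, x100, x010, x001} : Set (EuclideanSpace ℝ (Fin 3))) := by
    intro hcop
    apply hncop
    have hd : x001 ∈ affineSpan ℝ ({x000, x100, x010} : Set (EuclideanSpace ℝ (Fin 3))) :=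
      miquel_subset_span_of_coplanar hind₁ (by intro x hx; simp at hx ⊢; tauto) hcop (by simp)
    have hmem : ∀ y ∈ ({x000, x100, x010} : Set (EuclideanSpace ℝ (Fin 3))),
        y ∈ affineSpan ℝ ({x000, x100, x010} : Set (EuclideanSpace ℝ (Fin 3))) :=
      fun y hy => mem_affineSpan ℝ hy
    have ha' := hmem x000 (by simp); have hb' := hmem x100 (by simp)
    have hc' := hmem x010 (by simp)
    have hf' : x101 ∈ affineSpan ℝ ({x000, x100, x010} : Set (EuclideanSpace ℝ (Fin 3))) := by
      refine (affineSpan_le.mpr ?_) hfm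
      intro x hx; simp at hx; rcases hx with rfl | rfl | rfl <;> assumption
    have hg' : x011 ∈ affineSpan ℝ ({x000, x100, x010} : Set (EuclideanSpace ℝ (Fin 3))) := by
      refine (affineSpan_le.mpr ?_) hgm
      intro x hx; simp at hx; rcases hx with rfl | rfl | rfl <;> assumption
    have hsub7 : ({x000, x100, x010, x001, x110, x101, x011} :
        Set (EuclideanSpace ℝ (Fin 3))) ⊆
        (affineSpan ℝ ({x000, x100, x010} : Set (EuclideanSpace ℝ (Fin 3))) :
          Set (EuclideanSpace ℝ (Fin 3))) := by
      intro x hx; simp at hx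
      rcases hx with rfl | rfl | rfl | rfl | rfl | rfl | rfl <;> first
        | exact ha' | exact hb' | exact hc' | exact hd | exact he | exact hf' | exact hg'
    rw [coplanar_iff_finrank_le_two]
    have hle : vectorSpan ℝ ({x000, x100, x010, x001, x110, x101, x011} :
        Set (EuclideanSpace ℝ (Fin 3))) ≤
        (affineSpan ℝ ({x000, x100, x010} : Set (EuclideanSpace ℝ (Fin 3)))).direction := by
      rw [← direction_affineSpan]
      exact AffineSubspace.direction_le (affineSpan_le.mpr hsub7)
    have hfr : Module.finrank ℝ
        ((affineSpan ℝ ({x000, x100, x010} : Set (EuclideanSpace ℝ (Fin 3)))).direction) = 2 := by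
      rw [direction_affineSpan]
      have h := (affineIndependent_iff_finrank_vectorSpan_eq ℝ ![x000, x100, x010]
        (by simp : Fintype.card (Fin 3) = 2 + 1)).mp hind₁
      rwa [miquel_range_triple] at h
    calc Module.finrank ℝ (vectorSpan ℝ ({x000, x100, x010, x001, x110, x101, x011} :
          Set (EuclideanSpace ℝ (Fin 3))))
        ≤ Module.finrank ℝ
          ((affineSpan ℝ ({x000, x100, x010} : Set (EuclideanSpace ℝ (Fin 3)))).direction) :=
          Submodule.finrank_mono hle
      _ = 2 := hfr
  -- the four base points are affinely independent; take their circumsphere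
  have hind4 : AffineIndependent ℝ ![x000, x100, x010, x001] := by
    rw [affineIndependent_iff_not_finrank_vectorSpan_le ℝ _
      (by simp : Fintype.card (Fin 4) = 2 + 2)]
    intro hle
    apply h4
    rw [coplanar_iff_finrank_le_two]
    have hr4 : Set.range ![x000, x100, x010, x001] =
        ({x000, x100, x010, x001} : Set (EuclideanSpace ℝ (Fin 3))) := by
      simp [Matrix.range_cons, Matrix.range_empty]; ext x; simp; tauto
    rwa [hr4] at hle
  set T : Affine.Simplex ℝ (EuclideanSpace ℝ (Fin 3)) 3 := ⟨![x000, x100, x010, x001], hind4⟩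
  set o := T.circumcenter with ho_def
  set R := T.circumradius with hR_def
  have hTd : ∀ i, dist (T.points i) o = R := T.dist_circumcenter_eq_circumradius
  have hda : dist x000 o = R := by simpa [T] using hTd 0
  have hdb : dist x100 o = R := by simpa [T] using hTd 1
  have hdc : dist x010 o = R := by simpa [T] using hTd 2
  have hdd : dist x001 o = R := by simpa [T] using hTd 3
  -- transfer to the three face spheres
  obtain ⟨c₁, r₁, hc₁⟩ := hf₁.1
  obtain ⟨c₂, r₂, hc₂⟩ := hf₂.1
  obtain ⟨c₃, r₃, hc₃⟩ := hf₃.1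
  have hde : dist x110 o = R := by
    refine miquel_dist_eq_of_mem_span ⟨![x000, x100, x010], hind₁⟩ ?_ ?_ ?_ (hc₁ _ (by simp))
    · show x110 ∈ affineSpan ℝ (Set.range ![x000, x100, x010])
      rwa [miquel_range_triple]
    · intro i; fin_cases i <;> simpa using (by assumption : _)
    · intro i; fin_cases i <;> exact hc₁ _ (by simp)
  have hdf : dist x101 o = R := by
    refine miquel_dist_eq_of_mem_span ⟨![x000, x100, x001], hind₂⟩ ?_ ?_ ?_ (hc₂ _ (by simp))
    · show x101 ∈ affineSpan ℝ (Set.range ![x000, x100, x001])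
      rwa [miquel_range_triple]
    · intro i; fin_cases i <;> simpa using (by assumption : _)
    · intro i; fin_cases i <;> exact hc₂ _ (by simp)
  have hdg : dist x011 o = R := by
    refine miquel_dist_eq_of_mem_span ⟨![x000, x010, x001], hind₃⟩ ?_ ?_ ?_ (hc₃ _ (by simp))
    · show x011 ∈ affineSpan ℝ (Set.range ![x000, x010, x001])
      rwa [miquel_range_triple]
    · intro i; fin_cases i <;> simpa using (by assumption : _)
    · intro i; fin_cases i <;> exact hc₃ _ (by simp)
  refine ⟨o, R, ?_⟩
  intro p hp
  simp only [Set.mem_insert_iff, Set.mem_singleton_iff] at hp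
  rcases hp with rfl | rfl | rfl | rfl | rfl | rfl | rfl <;> assumption
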